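/- Fix a prior ρ ∈ R_0 with ρ_k = N(0,Σ_{ρ_k}) and set B̄_k = B_k^ρ := B_k(Σ_{ρ_k}^{−1}+I)^{−1/2}. Suppose the Riccati solution Γ_k (Γ_k = A_kᵀΓ_{k+1}A_k − A_kᵀΓ_{k+1}B_k(Σ_{ρ_k}^{−1}+I+B_kᵀΓ_{k+1}B_k)^{−1}B_kᵀΓ_{k+1}A_k, Γ_T = F) satisfies Σ_{ρ_k}^{−1}+I+B_kᵀΓ_{k+1}B_k ≻ 0 for all k. Then the Riccati solution Π_k with dynamics matrices (A_k, B̄_k) and Π_T = F satisfies Π_k = Γ_k for all k ∈ {0,…,T}, and the probability distribution of the state sequence {x_k}_{k=0}^T induced by x_{k+1} = A_k x_k + B̄_k u_k, u_k ~ N(−(I+B̄_kᵀΠ_{k+1}B̄_k)^{−1}B̄_kᵀΠ_{k+1}A_k x_k, (I+B̄_kᵀΠ_{k+1}B̄_k)^{−1}), x_0 ~ N(0,Σ_ini), coincides with the distribution induced by x_{k+1} = A_k x_k + B_k u_k, u_k ~ N(−Σ_{π̂_k^ρ}B_kᵀΓ_{k+1}A_k x_k, Σ_{π̂_k^ρ}),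 Σ_{π̂_k^ρ} = (Σ_{ρ_k}^{−1}+I+B_kᵀΓ_{k+1}B_k)^{−1}, x_0 ~ N(0,Σ_ini). -/

import Mathlib

open MeasureTheory ProbabilityTheory Matrix
open scoped Classical

noncomputable section

namespace MIDC

/-- Matrix square root of a positive semidefinite matrix (junk value `0` otherwise). -/
def msqrt {n : ℕ} (A : Matrix (Fin n) (Fin n) ℝ) : Matrix (Fin n) (Fin n) ℝ :=
  if h : A.PosSemidef then
    (h.1.eigenvectorUnitary : Matrix (Fin n) (Fin n) ℝ) *
      diagonal ((RCLike.ofReal : ℝ → ℝ) ∘ Real.sqrt ∘ h.1.eigenvalues) *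
      (star h.1.eigenvectorUnitary : Matrix (Fin n) (Fin n) ℝ)
  else 0
/-- Moore–Penrose pseudoinverse of a real matrix. -/
def pinv {n m : ℕ} (B : Matrix (Fin n) (Fin m) ℝ) : Matrix (Fin m) (Fin n) ℝ :=
  if h : ∃ X : Matrix (Fin m) (Fin n) ℝ,
      B * X * B = B ∧ X * B * X = X ∧ (B * X)ᵀ = B * X ∧ (X * B)ᵀ = X * B then
    h.choose
  else 0

/-- Standard Gaussian measure on `ℝ^m`. -/
def stdGaussian (m : ℕ) : Measure (Fin m → ℝ) :=
  Measure.pi fun _ => gaussianReal 0 1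

/-- Gaussian measure `N(μ, Λ)` on `ℝ^n` (meaningful for `Λ` positive semidefinite). -/
def gaussian {n : ℕ} (μ : Fin n → ℝ) (Λ : Matrix (Fin n) (Fin n) ℝ) : Measure (Fin n → ℝ) :=
  (stdGaussian n).map fun z => μ + (msqrt Λ).mulVec z

/-- (Real-valued) Kullback–Leibler divergence `D_KL[μ ‖ ν]`. -/
def KLr {α : Type*} [MeasurableSpace α] (μ ν : Measure α) : ℝ :=
  ∫ x, Real.log (μ.rnDeriv ν x).toReal ∂μ

/-- Differential entropy of a measure on `ℝ^m`. -/
def diffEntropy {m : ℕ} (μ : Measure (Fin m → ℝ)) : ℝ :=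
  - ∫ x, Real.log (μ.rnDeriv volume x).toReal ∂μ

/-- Mean vector of a measure on `ℝ^n`. -/
def meanVec {n : ℕ} (μ : Measure (Fin n → ℝ)) : Fin n → ℝ := fun i => ∫ x, x i ∂μ

/-- Covariance matrix of a measure on `ℝ^n`. -/
def covMatrix {n : ℕ} (μ : Measure (Fin n → ℝ)) : Matrix (Fin n) (Fin n) ℝ :=
  Matrix.of fun i j => ∫ x, (x i - meanVec μ i) * (x j - meanVec μ j) ∂μ

variable {n m T : ℕ}

/-- A (stochastic, state-feedback) policy: a Markov kernel from states to inputs at each time. -/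
abbrev Policy (n m T : ℕ) := Fin T → Kernel (Fin n → ℝ) (Fin m → ℝ)

/-- Admissibility: each kernel is a Markov (probability) kernel. -/
def Markovian (π : Policy n m T) : Prop := ∀ k, IsMarkovKernel (π k)

/-- Marginal distribution at time `k` of the time-inhomogeneous Markov chain with initial
distribution `μ0` and transition maps `f`. -/
def chain (μ0 : Measure (Fin n → ℝ)) (f : Fin T → (Fin n → ℝ) → Measure (Fin n → ℝ)) :
    ℕ → Measure (Fin n → ℝ)
  | 0 => μ0
  | k + 1 => if h : k < T then (chain μ0 f k).bind fun x => f ⟨k, h⟩ x else chain μ0 f k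

/-- State transition measure of `x_{k+1} = A_k x_k + B_k u_k`, `u_k ~ π_k(·|x_k)`. -/
def trans (A : Fin T → Matrix (Fin n) (Fin n) ℝ) (B : Fin T → Matrix (Fin n) (Fin m) ℝ)
    (π : Policy n m T) (k : Fin T) (x : Fin n → ℝ) : Measure (Fin n → ℝ) :=
  (π k x).map fun u => (A k).mulVec x + (B k).mulVec u

/-- State distribution at time `k` under policy `π`, with `x_0 ~ N(0, Sini)`. -/
def stateDist (A : Fin T → Matrix (Fin n) (Fin n) ℝ) (B : Fin T → Matrix (Fin n) (Fin m) ℝ)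
    (Sini : Matrix (Fin n) (Fin n) ℝ) (π : Policy n m T) : ℕ → Measure (Fin n → ℝ) :=
  chain (gaussian 0 Sini) (trans A B π)

/-- MaxEnt optimal control cost (with terminal weight `F`). -/
def MEcost (A : Fin T → Matrix (Fin n) (Fin n) ℝ) (B : Fin T → Matrix (Fin n) (Fin m) ℝ)
    (Sini F : Matrix (Fin n) (Fin n) ℝ) (π : Policy n m T) : ℝ :=
  (∑ k : Fin T, ∫ x,
      ((∫ u, (1/2 : ℝ) * (u ⬝ᵥ u) ∂(π k x)) - diffEntropy (π k x))
      ∂(stateDist A B Sini π k)) +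
    (1/2 : ℝ) * ∫ x, x ⬝ᵥ F.mulVec x ∂(stateDist A B Sini π T)

/-- MaxEnt density control cost (no terminal cost). -/
def MEcostD (A : Fin T → Matrix (Fin n) (Fin n) ℝ) (B : Fin T → Matrix (Fin n) (Fin m) ℝ)
    (Sini : Matrix (Fin n) (Fin n) ℝ) (π : Policy n m T) : ℝ :=
  ∑ k : Fin T, ∫ x,
    ((∫ u, (1/2 : ℝ) * (u ⬝ᵥ u) ∂(π k x)) - diffEntropy (π k x))
    ∂(stateDist A B Sini π k)

/-- MI optimal control cost with terminal weight `F` and Gaussian prior `ρ_k = N(mrho_k, Srho_k)`. -/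
def MIcost (A : Fin T → Matrix (Fin n) (Fin n) ℝ) (B : Fin T → Matrix (Fin n) (Fin m) ℝ)
    (Sini F : Matrix (Fin n) (Fin n) ℝ) (mrho : Fin T → Fin m → ℝ)
    (Srho : Fin T → Matrix (Fin m) (Fin m) ℝ) (π : Policy n m T) : ℝ :=
  (∑ k : Fin T, ∫ x,
      ((∫ u, (1/2 : ℝ) * (u ⬝ᵥ u) ∂(π k x)) + KLr (π k x) (gaussian (mrho k) (Srho k)))
      ∂(stateDist A B Sini π k)) +
    (1/2 : ℝ) * ∫ x, x ⬝ᵥ F.mulVec x ∂(stateDist A B Sini π T)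

/-- MI density control cost with Gaussian prior `ρ_k = N(mrho_k, Srho_k)` (no terminal cost). -/
def MIcostD (A : Fin T → Matrix (Fin n) (Fin n) ℝ) (B : Fin T → Matrix (Fin n) (Fin m) ℝ)
    (Sini : Matrix (Fin n) (Fin n) ℝ) (mrho : Fin T → Fin m → ℝ)
    (Srho : Fin T → Matrix (Fin m) (Fin m) ℝ) (π : Policy n m T) : ℝ :=
  ∑ k : Fin T, ∫ x,
    ((∫ u, (1/2 : ℝ) * (u ⬝ᵥ u) ∂(π k x)) + KLr (π k x) (gaussian (mrho k) (Srho k)))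
    ∂(stateDist A B Sini π k)

/-! Gramians and transition matrices -/

/-- Extend `Fin T`-indexed square matrices to `ℕ` (identity beyond the horizon). -/
def extM (A : Fin T → Matrix (Fin n) (Fin n) ℝ) : ℕ → Matrix (Fin n) (Fin n) ℝ :=
  fun k => if h : k < T then A ⟨k, h⟩ else 1

/-- Extend `Fin T`-indexed input matrices to `ℕ` (zero beyond the horizon). -/
def extB (B : Fin T → Matrix (Fin n) (Fin m) ℝ) : ℕ → Matrix (Fin n) (Fin m) ℝ :=
  fun k => if h : k < T then B ⟨k, h⟩ else 0

/-- `PhiUp A l k = A_{k-1} ⋯ A_l` for `k ≥ l` (junk `1` otherwise). -/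
def PhiUp (A : ℕ → Matrix (Fin n) (Fin n) ℝ) (l : ℕ) : ℕ → Matrix (Fin n) (Fin n) ℝ
  | 0 => 1
  | k + 1 => if l ≤ k then A k * PhiUp A l k else 1

/-- State-transition matrix `Φ(k, l)`. -/
def Phi (A : ℕ → Matrix (Fin n) (Fin n) ℝ) (k l : ℕ) : Matrix (Fin n) (Fin n) ℝ :=
  if l ≤ k then PhiUp A l k else (PhiUp A k l)⁻¹

/-- Reachability Gramian `G_r(k1, k0)`. -/
def Gr (A : ℕ → Matrix (Fin n) (Fin n) ℝ) (B : ℕ → Matrix (Fin n) (Fin m) ℝ)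
    (k1 k0 : ℕ) : Matrix (Fin n) (Fin n) ℝ :=
  ∑ k ∈ Finset.Ico k0 k1, Phi A k1 (k + 1) * B k * (B k)ᵀ * (Phi A k1 (k + 1))ᵀ

/-- Controllability Gramian `G_c(k1, k0)`. -/
def Gc (A : ℕ → Matrix (Fin n) (Fin n) ℝ) (B : ℕ → Matrix (Fin n) (Fin m) ℝ)
    (k1 k0 : ℕ) : Matrix (Fin n) (Fin n) ℝ :=
  ∑ k ∈ Finset.Ico k0 k1, Phi A k0 (k + 1) * B k * (B k)ᵀ * (Phi A k0 (k + 1))ᵀ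

/-- `G_c(T, 0)` for the system `(A, B)` on horizon `T`. -/
def GcT (A : Fin T → Matrix (Fin n) (Fin n) ℝ) (B : Fin T → Matrix (Fin n) (Fin m) ℝ) :
    Matrix (Fin n) (Fin n) ℝ :=
  Gc (extM A) (extB B) T 0

/-- `S_0 := G_c(T,0)^{-1/2} Sini G_c(T,0)^{-1/2}`. -/
def S0mat (A : Fin T → Matrix (Fin n) (Fin n) ℝ) (B : Fin T → Matrix (Fin n) (Fin m) ℝ)
    (Sini : Matrix (Fin n) (Fin n) ℝ) : Matrix (Fin n) (Fin n) ℝ :=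
  (msqrt (GcT A B))⁻¹ * Sini * (msqrt (GcT A B))⁻¹

/-- `S_T := G_c(T,0)^{-1/2} Φ(0,T) Sfin Φ(0,T)ᵀ G_c(T,0)^{-1/2}`. -/
def STmat (A : Fin T → Matrix (Fin n) (Fin n) ℝ) (B : Fin T → Matrix (Fin n) (Fin m) ℝ)
    (Sfin : Matrix (Fin n) (Fin n) ℝ) : Matrix (Fin n) (Fin n) ℝ :=
  (msqrt (GcT A B))⁻¹ * Phi (extM A) 0 T * Sfin * (Phi (extM A) 0 T)ᵀ * (msqrt (GcT A B))⁻¹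

/-- `𝓕 := S_0 + (1/2)I − (S_0^{1/2} S_T S_0^{1/2} + (1/4)I)^{1/2}`. -/
def calF (A : Fin T → Matrix (Fin n) (Fin n) ℝ) (B : Fin T → Matrix (Fin n) (Fin m) ℝ)
    (Sini Sfin : Matrix (Fin n) (Fin n) ℝ) : Matrix (Fin n) (Fin n) ℝ :=
  S0mat A B Sini + (1/2 : ℝ) • (1 : Matrix (Fin n) (Fin n) ℝ) -
    msqrt (msqrt (S0mat A B Sini) * STmat A B Sfin * msqrt (S0mat A B Sini) +
      (1/4 : ℝ) • (1 : Matrix (Fin n) (Fin n) ℝ))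

/-- `−S_0 + (1/2)I + (S_0^{1/2} S_T S_0^{1/2} + (1/4)I)^{1/2}`. -/
def calF2 (A : Fin T → Matrix (Fin n) (Fin n) ℝ) (B : Fin T → Matrix (Fin n) (Fin m) ℝ)
    (Sini Sfin : Matrix (Fin n) (Fin n) ℝ) : Matrix (Fin n) (Fin n) ℝ :=
  - S0mat A B Sini + (1/2 : ℝ) • (1 : Matrix (Fin n) (Fin n) ℝ) +
    msqrt (msqrt (S0mat A B Sini) * STmat A B Sfin * msqrt (S0mat A B Sini) +
      (1/4 : ℝ) • (1 : Matrix (Fin n) (Fin n) ℝ))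

/-- Assumption (G): regularity assumptions for covariance steering. -/
def AssumpG (A : Fin T → Matrix (Fin n) (Fin n) ℝ) (B : Fin T → Matrix (Fin n) (Fin m) ℝ)
    (Sini Sfin : Matrix (Fin n) (Fin n) ℝ) : Prop :=
  (∀ k : Fin T, IsUnit (A k)) ∧
  (∃ kr, 1 ≤ kr ∧ kr ≤ T ∧
    (∀ k, kr ≤ k → k ≤ T → IsUnit (Gr (extM A) (extB B) k 0)) ∧
    (∀ k, k < kr → IsUnit (Gr (extM A) (extB B) T k))) ∧
  IsUnit (calF A B Sini Sfin) ∧ IsUnit (calF2 A B Sini Sfin)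

/-- Solution of the Lyapunov difference equation `Q_{k+1} = A_k Q_k A_kᵀ − B_k B_kᵀ`. -/
def lyap (A : ℕ → Matrix (Fin n) (Fin n) ℝ) (B : ℕ → Matrix (Fin n) (Fin m) ℝ)
    (Q0 : Matrix (Fin n) (Fin n) ℝ) : ℕ → Matrix (Fin n) (Fin n) ℝ
  | 0 => Q0
  | k + 1 => A k * lyap A B Q0 k * (A k)ᵀ - B k * (B k)ᵀ

/-- The initial condition `Q_0 = G_c(T,0)^{1/2} S_0^{1/2} 𝓕^{-1} S_0^{1/2} G_c(T,0)^{1/2}`. -/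
def Q0mat (A : Fin T → Matrix (Fin n) (Fin n) ℝ) (B : Fin T → Matrix (Fin n) (Fin m) ℝ)
    (Sini Sfin : Matrix (Fin n) (Fin n) ℝ) : Matrix (Fin n) (Fin n) ℝ :=
  msqrt (GcT A B) * msqrt (S0mat A B Sini) * (calF A B Sini Sfin)⁻¹ *
    msqrt (S0mat A B Sini) * msqrt (GcT A B)

/-- `Q_k`, the solution of the Lyapunov equation with the steering initial condition. -/
def Qmat (A : Fin T → Matrix (Fin n) (Fin n) ℝ) (B : Fin T → Matrix (Fin n) (Fin m) ℝ)
    (Sini Sfin : Matrix (Fin n) (Fin n) ℝ) : ℕ → Matrix (Fin n) (Fin n) ℝ :=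
  lyap (extM A) (extB B) (Q0mat A B Sini Sfin)

/-! Riccati equations and closed-loop distributions -/

/-- The MaxEnt Riccati backward recursion. -/
def riccatiME (A : Fin T → Matrix (Fin n) (Fin n) ℝ) (B : Fin T → Matrix (Fin n) (Fin m) ℝ)
    (Pm : Fin (T + 1) → Matrix (Fin n) (Fin n) ℝ) : Prop :=
  ∀ k : Fin T, Pm k.castSucc =
    (A k)ᵀ * Pm k.succ * A k -
      (A k)ᵀ * Pm k.succ * B k *
        ((1 : Matrix (Fin m) (Fin m) ℝ) + (B k)ᵀ * Pm k.succ * B k)⁻¹ *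
        (B k)ᵀ * Pm k.succ * A k

/-- Covariance of the MaxEnt optimal policy at time `k`. -/
def MEpolCov (B : Fin T → Matrix (Fin n) (Fin m) ℝ)
    (Pm : Fin (T + 1) → Matrix (Fin n) (Fin n) ℝ) (k : Fin T) : Matrix (Fin m) (Fin m) ℝ :=
  ((1 : Matrix (Fin m) (Fin m) ℝ) + (B k)ᵀ * Pm k.succ * B k)⁻¹

/-- Mean of the MaxEnt optimal policy at time `k` and state `x`. -/
def MEpolMean (A : Fin T → Matrix (Fin n) (Fin n) ℝ) (B : Fin T → Matrix (Fin n) (Fin m) ℝ)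
    (Pm : Fin (T + 1) → Matrix (Fin n) (Fin n) ℝ) (k : Fin T) (x : Fin n → ℝ) : Fin m → ℝ :=
  -((MEpolCov B Pm k * (B k)ᵀ * Pm k.succ * A k).mulVec x)

/-- Closed-loop state distribution under the MaxEnt optimal policy determined by `Pm`. -/
def closedLoopME (A : Fin T → Matrix (Fin n) (Fin n) ℝ) (B : Fin T → Matrix (Fin n) (Fin m) ℝ)
    (Sini : Matrix (Fin n) (Fin n) ℝ) (Pm : Fin (T + 1) → Matrix (Fin n) (Fin n) ℝ) :
    ℕ → Measure (Fin n → ℝ) :=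
  chain (gaussian 0 Sini) fun k x =>
    (gaussian (MEpolMean A B Pm k x) (MEpolCov B Pm k)).map fun u =>
      (A k).mulVec x + (B k).mulVec u

/-- The MI Riccati backward recursion for a fixed zero-mean Gaussian prior with
covariances `Srho`. -/
def riccatiMI (A : Fin T → Matrix (Fin n) (Fin n) ℝ) (B : Fin T → Matrix (Fin n) (Fin m) ℝ)
    (Srho : Fin T → Matrix (Fin m) (Fin m) ℝ)
    (Γ : Fin (T + 1) → Matrix (Fin n) (Fin n) ℝ) : Prop :=
  ∀ k : Fin T, Γ k.castSucc =
    (A k)ᵀ * Γ k.succ * A k -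
      (A k)ᵀ * Γ k.succ * B k *
        ((Srho k)⁻¹ + 1 + (B k)ᵀ * Γ k.succ * B k)⁻¹ *
        (B k)ᵀ * Γ k.succ * A k

/-- Covariance of the MI optimal policy at time `k`. -/
def MIpolCov (B : Fin T → Matrix (Fin n) (Fin m) ℝ) (Srho : Fin T → Matrix (Fin m) (Fin m) ℝ)
    (Γ : Fin (T + 1) → Matrix (Fin n) (Fin n) ℝ) (k : Fin T) : Matrix (Fin m) (Fin m) ℝ :=
  ((Srho k)⁻¹ + 1 + (B k)ᵀ * Γ k.succ * B k)⁻¹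

/-- Mean of the MI optimal policy at time `k` and state `x`. -/
def MIpolMean (A : Fin T → Matrix (Fin n) (Fin n) ℝ) (B : Fin T → Matrix (Fin n) (Fin m) ℝ)
    (Srho : Fin T → Matrix (Fin m) (Fin m) ℝ) (Γ : Fin (T + 1) → Matrix (Fin n) (Fin n) ℝ)
    (k : Fin T) (x : Fin n → ℝ) : Fin m → ℝ :=
  -((MIpolCov B Srho Γ k * (B k)ᵀ * Γ k.succ * A k).mulVec x)

/-- Closed-loop state distribution under the MI optimal policy determined by `Γ`. -/
def closedLoopMI (A : Fin T → Matrix (Fin n) (Fin n) ℝ) (B : Fin T → Matrix (Fin n) (Fin m) ℝ)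
    (Sini : Matrix (Fin n) (Fin n) ℝ) (Srho : Fin T → Matrix (Fin m) (Fin m) ℝ)
    (Γ : Fin (T + 1) → Matrix (Fin n) (Fin n) ℝ) : ℕ → Measure (Fin n → ℝ) :=
  chain (gaussian 0 Sini) fun k x =>
    (gaussian (MIpolMean A B Srho Γ k x) (MIpolCov B Srho Γ k)).map fun u =>
      (A k).mulVec x + (B k).mulVec u

/-! Path-space (Schrödinger bridge) objects -/

/-- Auxiliary construction of the path measure of a Markov chain. -/
def pathAux (μ0 : Measure (Fin n → ℝ)) (f : Fin T → (Fin n → ℝ) → Measure (Fin n → ℝ)) :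
    ℕ → Measure (Fin (T + 1) → Fin n → ℝ)
  | 0 => μ0.map fun x _ => x
  | k + 1 =>
    if h : k < T then
      (pathAux μ0 f k).bind fun ω =>
        (f ⟨k, h⟩ (ω ⟨k, by omega⟩)).map fun y => Function.update ω ⟨k + 1, by omega⟩ y
    else pathAux μ0 f k

/-- The law on path space `χ = (ℝ^n)^{T+1}` of the Markov chain with initial distribution `μ0`
and transition maps `f`. -/
def pathMeasure (μ0 : Measure (Fin n → ℝ))
    (f : Fin T → (Fin n → ℝ) → Measure (Fin n → ℝ)) : Measure (Fin (T + 1) → Fin n → ℝ) :=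
  pathAux μ0 f T

/-- The law `Q^ρ` on path space of the reference process
`x_{k+1} = A_k x_k + B_k w_k`, `w_k ~ N(mrho_k, Srho_k)`, `x_0 ~ N(mref, Sref)`. -/
def refLaw (A : Fin T → Matrix (Fin n) (Fin n) ℝ) (B : Fin T → Matrix (Fin n) (Fin m) ℝ)
    (mref : Fin n → ℝ) (Sref : Matrix (Fin n) (Fin n) ℝ)
    (mrho : Fin T → Fin m → ℝ) (Srho : Fin T → Matrix (Fin m) (Fin m) ℝ) :
    Measure (Fin (T + 1) → Fin n → ℝ) :=
  pathMeasure (gaussian mref Sref) fun k x =>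
    (gaussian (mrho k) (Srho k)).map fun w => (A k).mulVec x + (B k).mulVec w

/-- The law `P^π` on path space of the controlled process
`x_{k+1} = A_k x_k + B_k u_k`, `u_k` drawn from the state-dependent input distributions `f`,
`x_0 ~ N(0, Sini)`. -/
def ctrlLaw (A : Fin T → Matrix (Fin n) (Fin n) ℝ) (B : Fin T → Matrix (Fin n) (Fin m) ℝ)
    (Sini : Matrix (Fin n) (Fin n) ℝ) (f : Fin T → (Fin n → ℝ) → Measure (Fin m → ℝ)) :
    Measure (Fin (T + 1) → Fin n → ℝ) :=
  pathMeasure (gaussian 0 Sini) fun k x =>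
    (f k x).map fun u => (A k).mulVec x + (B k).mulVec u

/-- The regularization potential `V(x_0, …, x_T) = Σ_k ½‖x_{k+1} − A_k x_k‖²_{B_k^{†ᵀ}B_k^†}`. -/
def Vfun (A : Fin T → Matrix (Fin n) (Fin n) ℝ) (B : Fin T → Matrix (Fin n) (Fin m) ℝ)
    (ω : Fin (T + 1) → Fin n → ℝ) : ℝ :=
  ∑ k : Fin T, (1/2 : ℝ) *
    ((ω k.succ - (A k).mulVec (ω k.castSucc)) ⬝ᵥ
      ((pinv (B k))ᵀ * pinv (B k)).mulVec (ω k.succ - (A k).mulVec (ω k.castSucc)))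

/-- The generalized Schrödinger bridge objective `D_KL[P‖Q] + E_P[V]`. -/
def gsbObj (A : Fin T → Matrix (Fin n) (Fin n) ℝ) (B : Fin T → Matrix (Fin n) (Fin m) ℝ)
    (Q P : Measure (Fin (T + 1) → Fin n → ℝ)) : ℝ :=
  KLr P Q + ∫ ω, Vfun A B ω ∂P

/-- Membership in `Π((μini,Sini), (μfin,Sfin))`: probability measures on path space with the
prescribed Gaussian marginals at times `0` and `T`. -/
def memBridgeμ (μini : Fin n → ℝ) (Sini : Matrix (Fin n) (Fin n) ℝ) (μfin : Fin n → ℝ)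
    (Sfin : Matrix (Fin n) (Fin n) ℝ) (P : Measure (Fin (T + 1) → Fin n → ℝ)) : Prop :=
  IsProbabilityMeasure P ∧ P.map (fun ω => ω 0) = gaussian μini Sini ∧
    P.map (fun ω => ω (Fin.last T)) = gaussian μfin Sfin

/-- Membership in `Π(Sini, Sfin)` (zero-mean marginal constraints). -/
def memBridge (Sini Sfin : Matrix (Fin n) (Fin n) ℝ)
    (P : Measure (Fin (T + 1) → Fin n → ℝ)) : Prop :=
  memBridgeμ 0 Sini 0 Sfin P

/-- State covariance recursion `Σ_{x_{k+1}} = (A_k + B_k P_k) Σ_{x_k} (A_k + B_k P_k)ᵀ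
+ B_k Spi_k B_kᵀ`, `Σ_{x_0} = Sini`, under a policy in `P_0`. -/
def covSeq (A : Fin T → Matrix (Fin n) (Fin n) ℝ) (B : Fin T → Matrix (Fin n) (Fin m) ℝ)
    (Pg : Fin T → Matrix (Fin m) (Fin n) ℝ) (Spi : Fin T → Matrix (Fin m) (Fin m) ℝ)
    (Sini : Matrix (Fin n) (Fin n) ℝ) : ℕ → Matrix (Fin n) (Fin n) ℝ
  | 0 => Sini
  | k + 1 =>
    if h : k < T then
      (A ⟨k, h⟩ + B ⟨k, h⟩ * Pg ⟨k, h⟩) * covSeq A B Pg Spi Sini k *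
          (A ⟨k, h⟩ + B ⟨k, h⟩ * Pg ⟨k, h⟩)ᵀ +
        B ⟨k, h⟩ * Spi ⟨k, h⟩ * (B ⟨k, h⟩)ᵀ
    else covSeq A B Pg Spi Sini k

/-- `F` steers the terminal covariance to `Sfin` under the MaxEnt optimal policy obtained from
the Riccati solution with terminal condition `F`. -/
def steersME (A : Fin T → Matrix (Fin n) (Fin n) ℝ) (B : Fin T → Matrix (Fin n) (Fin m) ℝ)
    (Sini Sfin : Matrix (Fin n) (Fin n) ℝ) (F : Matrix (Fin n) (Fin n) ℝ) : Prop :=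
  ∀ Pm : Fin (T + 1) → Matrix (Fin n) (Fin n) ℝ, riccatiME A B Pm → Pm (Fin.last T) = F →
    covMatrix (closedLoopME A B Sini Pm T) = Sfin

/-- `F` steers the terminal covariance to `Sfin` under the MI optimal policy obtained from
the Riccati solution with terminal condition `F` (for the fixed zero-mean Gaussian prior with
covariances `Srho`). -/
def steersMI (A : Fin T → Matrix (Fin n) (Fin n) ℝ) (B : Fin T → Matrix (Fin n) (Fin m) ℝ)
    (Sini Sfin : Matrix (Fin n) (Fin n) ℝ) (Srho : Fin T → Matrix (Fin m) (Fin m) ℝ)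
    (F : Matrix (Fin n) (Fin n) ℝ) : Prop :=
  ∀ Γ : Fin (T + 1) → Matrix (Fin n) (Fin n) ℝ, riccatiMI A B Srho Γ → Γ (Fin.last T) = F →
    covMatrix (closedLoopMI A B Sini Srho Γ T) = Sfin

/-- `πhat` is the unique optimal policy of the MaxEnt optimal control problem with terminal
weight `F`. -/
def uniqOptSoftME (A : Fin T → Matrix (Fin n) (Fin n) ℝ) (B : Fin T → Matrix (Fin n) (Fin m) ℝ)
    (Sini F : Matrix (Fin n) (Fin n) ℝ) (πhat : Policy n m T) : Prop :=
  Markovian πhat ∧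
  (∀ π : Policy n m T, Markovian π → MEcost A B Sini F πhat ≤ MEcost A B Sini F π) ∧
  (∀ π : Policy n m T, Markovian π →
    (∀ π' : Policy n m T, Markovian π' → MEcost A B Sini F π ≤ MEcost A B Sini F π') →
    ∀ (k : Fin T) (x : Fin n → ℝ), π k x = πhat k x)

/-- `F` makes the terminal state covariance equal to `Sfin` under the unique optimal policy of
the MaxEnt optimal control problem with terminal weight `F`. -/
def steersOptME (A : Fin T → Matrix (Fin n) (Fin n) ℝ) (B : Fin T → Matrix (Fin n) (Fin m) ℝ)
    (Sini Sfin F : Matrix (Fin n) (Fin n) ℝ) : Prop :=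
  ∃ πhat : Policy n m T, uniqOptSoftME A B Sini F πhat ∧
    covMatrix (stateDist A B Sini πhat T) = Sfin

/-- `πhat` is the unique optimal policy of the soft terminal constrained MI optimal control
problem with terminal weight `F` and fixed zero-mean Gaussian prior with covariances `Srho`. -/
def uniqOptSoftMI (A : Fin T → Matrix (Fin n) (Fin n) ℝ) (B : Fin T → Matrix (Fin n) (Fin m) ℝ)
    (Sini F : Matrix (Fin n) (Fin n) ℝ) (Srho : Fin T → Matrix (Fin m) (Fin m) ℝ)
    (πhat : Policy n m T) : Prop :=
  Markovian πhat ∧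
  (∀ π : Policy n m T, Markovian π →
    MIcost A B Sini F (fun _ => 0) Srho πhat ≤ MIcost A B Sini F (fun _ => 0) Srho π) ∧
  (∀ π : Policy n m T, Markovian π →
    (∀ π' : Policy n m T, Markovian π' →
      MIcost A B Sini F (fun _ => 0) Srho π ≤ MIcost A B Sini F (fun _ => 0) Srho π') →
    ∀ (k : Fin T) (x : Fin n → ℝ), π k x = πhat k x)

/-- `F` makes the terminal state covariance equal to `Sfin` under the unique optimal policy of
the soft terminal constrained MI optimal control problem with terminal weight `F`. -/
def steersOptMI (A : Fin T → Matrix (Fin n) (Fin n) ℝ) (B : Fin T → Matrix (Fin n) (Fin m) ℝ)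
    (Sini Sfin : Matrix (Fin n) (Fin n) ℝ) (Srho : Fin T → Matrix (Fin m) (Fin m) ℝ)
    (F : Matrix (Fin n) (Fin n) ℝ) : Prop :=
  ∃ πhat : Policy n m T, uniqOptSoftMI A B Sini F Srho πhat ∧
    covMatrix (stateDist A B Sini πhat T) = Sfin

/-- Feasibility for the density control problems: admissible policy meeting the terminal
Gaussian density constraint. -/
def feasD (A : Fin T → Matrix (Fin n) (Fin n) ℝ) (B : Fin T → Matrix (Fin n) (Fin m) ℝ)
    (Sini Sfin : Matrix (Fin n) (Fin n) ℝ) (π : Policy n m T) : Prop :=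
  Markovian π ∧ stateDist A B Sini π T = gaussian 0 Sfin


/-! ### Auxiliary lemmas for the proof of Statement 5 -/

section AuxGaussian

open scoped ENNReal NNReal Real

lemma measurable_mulVec' {a b : ℕ} (M : Matrix (Fin a) (Fin b) ℝ) :
    Measurable fun z : Fin b → ℝ => M.mulVec z := by
  apply measurable_pi_lambda
  intro i
  simp only [Matrix.mulVec, dotProduct]
  exact Finset.measurable_sum _ fun j _ => (measurable_pi_apply j).const_mul _

lemma lintegral_pi_prod : ∀ (k : ℕ) (f : Fin k → ℝ → ℝ≥0∞), (∀ i, Measurable (f i)) →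
    ∫⁻ z : Fin k → ℝ, ∏ i, f i (z i) ∂(Measure.pi fun _ => (volume : Measure ℝ))
      = ∏ i, ∫⁻ t, f i t := by
  intro k
  induction k with
  | zero => intro f _; simp
  | succ k ih =>
    intro f hf
    have hmp := (MeasureTheory.measurePreserving_piFinSuccAbove
      (fun _ : Fin (k+1) => (volume : Measure ℝ)) 0).symm
    have hmeas : Measurable fun z : Fin (k+1) → ℝ => ∏ i, f i (z i) :=
      Finset.measurable_prod _ fun i _ => (hf i).comp (measurable_pi_apply i)
    rw [← hmp.lintegral_comp hmeas]
    have : ∀ p : ℝ × (Fin k → ℝ),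
        (∏ i, f i (((MeasurableEquiv.piFinSuccAbove (fun _ => ℝ) 0).symm p) i))
          = f 0 p.1 * ∏ j : Fin k, f j.succ (p.2 j) := by
      intro p
      have h0 : ((MeasurableEquiv.piFinSuccAbove (fun _ : Fin (k+1) => ℝ) 0).symm p)
          = Fin.cons p.1 p.2 := by
        ext j
        simp [MeasurableEquiv.piFinSuccAbove, Fin.insertNthEquiv, Fin.insertNth_zero']
      rw [h0, Fin.prod_univ_succ, Fin.cons_zero]
      simp [Fin.cons_succ]
    rw [lintegral_congr this]
    rw [lintegral_prod_mul (f := f 0) (g := fun y : Fin k → ℝ => ∏ j : Fin k, f j.succ (y j))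
      (hf 0).aemeasurable
      (Finset.measurable_prod Finset.univ
        (fun (j : Fin k) _ => (hf j.succ).comp (measurable_pi_apply j))).aemeasurable]
    rw [Fin.prod_univ_succ]
    congr 1
    exact ih _ fun i => hf i.succ

lemma stdGaussian_eq_withDensity (m : ℕ) :
    stdGaussian m = (volume : Measure (Fin m → ℝ)).withDensity
      (fun z => ∏ i, gaussianPDF 0 1 (z i)) := by
  simp only [stdGaussian]
  refine Measure.pi_eq fun s hs => ?_
  rw [withDensity_apply _ (MeasurableSet.univ_pi hs),
    ← lintegral_indicator (MeasurableSet.univ_pi hs)]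
  have hind : (Set.indicator (Set.univ.pi s) fun z : Fin m → ℝ => ∏ i, gaussianPDF 0 1 (z i))
      = fun z => ∏ i, (s i).indicator (gaussianPDF 0 1) (z i) := by
    funext z
    by_cases hz : z ∈ Set.univ.pi s
    · rw [Set.indicator_of_mem hz]
      exact Finset.prod_congr rfl fun i _ =>
        (Set.indicator_of_mem (hz i (Set.mem_univ i)) _).symm
    · rw [Set.indicator_of_notMem hz]
      simp only [Set.mem_pi, Set.mem_univ, forall_true_left] at hz
      push_neg at hz
      obtain ⟨i, hi⟩ := hz
      exact (Finset.prod_eq_zero (Finset.mem_univ i)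
        (Set.indicator_of_notMem hi _)).symm
  rw [hind, MeasureTheory.volume_pi,
    lintegral_pi_prod m _ (fun i => (measurable_gaussianPDF 0 1).indicator (hs i))]
  exact Finset.prod_congr rfl fun i _ => by
    rw [lintegral_indicator (hs i), gaussianReal_apply 0 one_ne_zero]

lemma prod_gaussianPDF_eq {m : ℕ} (z : Fin m → ℝ) :
    ∏ i, gaussianPDF 0 1 (z i)
      = ENNReal.ofReal ((Real.sqrt (2 * π))⁻¹ ^ m * Real.exp (-(z ⬝ᵥ z) / 2)) := by
  simp only [gaussianPDF]
  rw [← ENNReal.ofReal_prod_of_nonneg (fun i _ => gaussianPDFReal_nonneg 0 1 (z i))]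
  congr 1
  simp only [gaussianPDFReal, NNReal.coe_one, mul_one, sub_zero]
  rw [Finset.prod_mul_distrib, Finset.prod_const, Finset.card_univ, Fintype.card_fin,
    ← Real.exp_sum]
  congr 1
  have h : ∀ i : Fin m, -(z i) ^ 2 / 2 = -(z i * z i / 2) := fun i => by
    rw [pow_two, neg_div]
  simp_rw [h]
  rw [Finset.sum_neg_distrib, dotProduct, neg_div, Finset.sum_div]

lemma map_withDensity_equiv {α β : Type*} [MeasurableSpace α] [MeasurableSpace β]
    (e : α ≃ᵐ β) (μ : Measure α) (g : α → ℝ≥0∞) (hg : Measurable g) :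
    (μ.withDensity g).map e = (μ.map e).withDensity fun y => g (e.symm y) := by
  ext s hs
  rw [Measure.map_apply e.measurable hs, withDensity_apply _ (e.measurable hs),
    withDensity_apply _ hs,
    setLIntegral_map (f := fun y => g (e.symm y)) hs (hg.comp e.symm.measurable) e.measurable]
  simp only [MeasurableEquiv.symm_apply_apply]

lemma stdGaussian_map_orth {m : ℕ} (Q : Matrix (Fin m) (Fin m) ℝ)
    (h1 : Q * Qᵀ = 1) (h2 : Qᵀ * Q = 1) :
    (stdGaussian m).map (fun z => Q.mulVec z) = stdGaussian m := by
  have hdet1 : Q.det * Q.det = 1 := by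
    have h := congrArg Matrix.det h2
    rwa [Matrix.det_mul, Matrix.det_transpose, Matrix.det_one] at h
  have hQdet : Q.det ≠ 0 := by
    intro h0; rw [h0, mul_zero] at hdet1; exact zero_ne_one hdet1
  have habs : |Q.det⁻¹| = 1 := by
    have habs1 : |Q.det| = 1 := by
      have : |Q.det| * |Q.det| = 1 := by rw [← abs_mul, hdet1, abs_one]
      nlinarith [abs_nonneg Q.det]
    rw [abs_inv, habs1]; norm_num
  let e : (Fin m → ℝ) ≃ᵐ (Fin m → ℝ) :=
    { toFun := fun z => Q.mulVec z
      invFun := fun z => Qᵀ.mulVec z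
      left_inv := fun z => by show Qᵀ *ᵥ (Q *ᵥ z) = z; rw [Matrix.mulVec_mulVec, h2, Matrix.one_mulVec]
      right_inv := fun z => by show Q *ᵥ (Qᵀ *ᵥ z) = z; rw [Matrix.mulVec_mulVec, h1, Matrix.one_mulVec]
      measurable_toFun := measurable_mulVec' Q
      measurable_invFun := measurable_mulVec' Qᵀ }
  have hdot : ∀ z : Fin m → ℝ, (Qᵀ.mulVec z) ⬝ᵥ (Qᵀ.mulVec z) = z ⬝ᵥ z := by
    intro z
    have key : Qᵀ.mulVec z = Matrix.vecMul z Q := Matrix.mulVec_transpose Q z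
    rw [key, ← Matrix.dotProduct_mulVec, ← key, Matrix.mulVec_mulVec, h1, Matrix.one_mulVec]
  have hco : (fun z : Fin m → ℝ => Q.mulVec z) = ⇑e := rfl
  rw [stdGaussian_eq_withDensity, hco,
    map_withDensity_equiv e volume (fun z => ∏ i, gaussianPDF 0 1 (z i))
      (Finset.measurable_prod Finset.univ fun i _ =>
        (measurable_gaussianPDF 0 1).comp (measurable_pi_apply i))]
  have hvol : (volume : Measure (Fin m → ℝ)).map e = volume := by
    have hlin : ⇑e = ⇑(Matrix.toLin' Q) := by
      funext z; rw [Matrix.toLin'_apply]; rfl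
    rw [hlin, Real.map_matrix_volume_pi_eq_smul_volume_pi hQdet, habs,
      ENNReal.ofReal_one, one_smul]
  rw [hvol]
  congr 1
  funext z
  have hez : e.symm z = Qᵀ.mulVec z := rfl
  rw [hez, prod_gaussianPDF_eq, prod_gaussianPDF_eq, hdot z]

lemma gaussian_map_affine {n m : ℕ} (μ : Fin m → ℝ) (Λ : Matrix (Fin m) (Fin m) ℝ)
    (c : Fin n → ℝ) (Bm : Matrix (Fin n) (Fin m) ℝ) :
    (gaussian μ Λ).map (fun u => c + Bm.mulVec u)
      = (stdGaussian m).map (fun z => (c + Bm.mulVec μ) + (Bm * msqrt Λ).mulVec z) := by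
  simp only [gaussian]
  rw [Measure.map_map ((measurable_mulVec' Bm).const_add c)
    ((measurable_mulVec' (msqrt Λ)).const_add μ)]
  congr 1
  funext z
  simp only [Function.comp_apply]
  rw [Matrix.mulVec_add, Matrix.mulVec_mulVec, add_assoc]

lemma map_affine_congr {n m : ℕ} (c : Fin n → ℝ) (N1 N2 : Matrix (Fin n) (Fin m) ℝ)
    (O : Matrix (Fin m) (Fin m) ℝ) (h1 : O * Oᵀ = 1) (h2 : Oᵀ * O = 1) (hN : N1 = N2 * O) :
    (stdGaussian m).map (fun z => c + N1.mulVec z)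
      = (stdGaussian m).map (fun z => c + N2.mulVec z) := by
  have hco : (fun z : Fin m → ℝ => c + N1.mulVec z)
      = (fun z => c + N2.mulVec z) ∘ (fun z => O.mulVec z) := by
    funext z
    simp only [Function.comp_apply]
    rw [hN, ← Matrix.mulVec_mulVec]
  rw [hco, ← Measure.map_map ((measurable_mulVec' N2).const_add c) (measurable_mulVec' O),
    stdGaussian_map_orth O h1 h2]

lemma msqrt_mul_self {k : ℕ} {M : Matrix (Fin k) (Fin k) ℝ} (hM : M.PosSemidef) :
    msqrt M * msqrt M = M := by
  rw [msqrt, dif_pos hM]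
  have hU : (star hM.1.eigenvectorUnitary : Matrix (Fin k) (Fin k) ℝ) *
      (hM.1.eigenvectorUnitary : Matrix (Fin k) (Fin k) ℝ) = 1 :=
    Unitary.coe_star_mul_self _
  have hD : diagonal ((RCLike.ofReal : ℝ → ℝ) ∘ Real.sqrt ∘ hM.1.eigenvalues) *
      diagonal ((RCLike.ofReal : ℝ → ℝ) ∘ Real.sqrt ∘ hM.1.eigenvalues)
      = diagonal ((RCLike.ofReal : ℝ → ℝ) ∘ hM.1.eigenvalues) := by
    rw [diagonal_mul_diagonal]
    congr 1; funext i
    simp [Real.mul_self_sqrt (hM.eigenvalues_nonneg i)]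
  conv_rhs => rw [hM.1.spectral_theorem]
  rw [Unitary.conjStarAlgAut_apply, ← hD]
  simp only [Matrix.mul_assoc]
  rw [← Matrix.mul_assoc _ _ (diagonal _ * _), hU, Matrix.one_mul]

lemma msqrt_posSemidef {k : ℕ} {M : Matrix (Fin k) (Fin k) ℝ} (hM : M.PosSemidef) :
    (msqrt M).PosSemidef := by
  rw [msqrt, dif_pos hM]
  have h := (posSemidef_diagonal_iff.mpr fun i => by
    simpa using Real.sqrt_nonneg (hM.1.eigenvalues i) :
      (diagonal ((RCLike.ofReal : ℝ → ℝ) ∘ Real.sqrt ∘ hM.1.eigenvalues)).PosSemidef)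
  rw [Matrix.star_eq_conjTranspose]
  exact h.mul_mul_conjTranspose_same _

lemma msqrt_transpose {k : ℕ} {M : Matrix (Fin k) (Fin k) ℝ} (hM : M.PosSemidef) :
    (msqrt M)ᵀ = msqrt M := by
  have h := (msqrt_posSemidef hM).1
  rwa [Matrix.IsHermitian, Matrix.conjTranspose_eq_transpose_of_trivial] at h

lemma msqrt_det_isUnit {k : ℕ} {M : Matrix (Fin k) (Fin k) ℝ} (hM : M.PosDef) :
    IsUnit (msqrt M).det := by
  have h := congrArg Matrix.det (msqrt_mul_self hM.posSemidef)
  rw [Matrix.det_mul] at h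
  refine isUnit_iff_ne_zero.mpr fun h0 => ?_
  rw [h0, zero_mul] at h
  exact (ne_of_gt hM.det_pos) h.symm

lemma mul_pair {k : ℕ} {X Y t : Matrix (Fin k) (Fin k) ℝ} (h : X * X = Y) :
    X * (X * t) = Y * t := by
  rw [← Matrix.mul_assoc, h]

end AuxGaussian

/-- Lemma 2 of the paper: with `B̄_k = B_k^ρ = B_k (Σ_{ρ_k}^{-1}+I)^{-1/2}`,
the MaxEnt Riccati solution `Π` (with matrices `(A, B̄)` and `Π_T = F`) coincides with the MI
Riccati solution `Γ`, and the law of the state sequence of the MaxEnt closed loop coincides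
with that of the MI closed loop. -/
theorem ME_MI_state_equivalence
    (n m T : ℕ) (hT : 1 ≤ T)
    (A : Fin T → Matrix (Fin n) (Fin n) ℝ) (B : Fin T → Matrix (Fin n) (Fin m) ℝ)
    (F : Matrix (Fin n) (Fin n) ℝ) (hF : F.IsSymm)
    (Sini : Matrix (Fin n) (Fin n) ℝ) (hSini : Sini.PosDef)
    (Srho : Fin T → Matrix (Fin m) (Fin m) ℝ) (hSrho : ∀ k, (Srho k).PosDef)
    (Brho : Fin T → Matrix (Fin n) (Fin m) ℝ)
    (hBrho : ∀ k, Brho k = B k * (msqrt ((Srho k)⁻¹ + 1))⁻¹)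
    (Γ : Fin (T + 1) → Matrix (Fin n) (Fin n) ℝ)
    (hpos : ∀ k : Fin T, ((Srho k)⁻¹ + 1 + (B k)ᵀ * Γ k.succ * B k).PosDef)
    (hric : riccatiMI A B Srho Γ) (hterm : Γ (Fin.last T) = F) :
    ∀ Pm : Fin (T + 1) → Matrix (Fin n) (Fin n) ℝ,
      riccatiME A Brho Pm → Pm (Fin.last T) = F →
      (∀ k : Fin (T + 1), Pm k = Γ k) ∧
      ctrlLaw A Brho Sini (fun k x => gaussian (MEpolMean A Brho Pm k x) (MEpolCov Brho Pm k))
        = ctrlLaw A B Sini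
            (fun k x => gaussian (MIpolMean A B Srho Γ k x) (MIpolCov B Srho Γ k)) := by
  intro Pm hricME hPmT
  have hMpos : ∀ k : Fin T, ((Srho k)⁻¹ + 1).PosDef :=
    fun k => ((hSrho k).inv).add Matrix.PosDef.one
  have hGt : ∀ k : Fin T, (msqrt ((Srho k)⁻¹ + 1))ᵀ = msqrt ((Srho k)⁻¹ + 1) :=
    fun k => msqrt_transpose (hMpos k).posSemidef
  have hGG : ∀ k : Fin T, msqrt ((Srho k)⁻¹ + 1) * msqrt ((Srho k)⁻¹ + 1) = (Srho k)⁻¹ + 1 :=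
    fun k => msqrt_mul_self (hMpos k).posSemidef
  have hGdet : ∀ k : Fin T, IsUnit (msqrt ((Srho k)⁻¹ + 1)).det :=
    fun k => msqrt_det_isUnit (hMpos k)
  have hGiT : ∀ k : Fin T, ((msqrt ((Srho k)⁻¹ + 1))⁻¹)ᵀ = (msqrt ((Srho k)⁻¹ + 1))⁻¹ :=
    fun k => by rw [Matrix.transpose_nonsing_inv, hGt]
  have hBrhoT : ∀ k : Fin T, (Brho k)ᵀ = (msqrt ((Srho k)⁻¹ + 1))⁻¹ * (B k)ᵀ :=
    fun k => by rw [hBrho k, Matrix.transpose_mul, hGiT]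
  have hform : ∀ k : Fin T,
      (1 : Matrix (Fin m) (Fin m) ℝ) + (Brho k)ᵀ * Γ k.succ * Brho k
        = (msqrt ((Srho k)⁻¹ + 1))⁻¹ * ((Srho k)⁻¹ + 1 + (B k)ᵀ * Γ k.succ * B k) *
            (msqrt ((Srho k)⁻¹ + 1))⁻¹ := by
    intro k
    set G := msqrt ((Srho k)⁻¹ + 1) with hGdef
    have hone : G⁻¹ * ((Srho k)⁻¹ + 1) * G⁻¹ = 1 := by
      rw [← hGG k, Matrix.nonsing_inv_mul_cancel_left _ _ (hGdet k),
        Matrix.mul_nonsing_inv _ (hGdet k)]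
    have hsecond : (Brho k)ᵀ * Γ k.succ * Brho k
        = G⁻¹ * ((B k)ᵀ * Γ k.succ * B k) * G⁻¹ := by
      rw [hBrhoT k, hBrho k]
      simp only [Matrix.mul_assoc]
      rfl
    calc (1 : Matrix (Fin m) (Fin m) ℝ) + (Brho k)ᵀ * Γ k.succ * Brho k
        = G⁻¹ * ((Srho k)⁻¹ + 1) * G⁻¹ + G⁻¹ * ((B k)ᵀ * Γ k.succ * B k) * G⁻¹ := by
          rw [hone, hsecond]
      _ = G⁻¹ * ((Srho k)⁻¹ + 1 + (B k)ᵀ * Γ k.succ * B k) * G⁻¹ := by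
          simp only [Matrix.mul_add, Matrix.add_mul]
  have hcovEq : ∀ k : Fin T,
      ((1 : Matrix (Fin m) (Fin m) ℝ) + (Brho k)ᵀ * Γ k.succ * Brho k)⁻¹
        = msqrt ((Srho k)⁻¹ + 1) * ((Srho k)⁻¹ + 1 + (B k)ᵀ * Γ k.succ * B k)⁻¹ *
            msqrt ((Srho k)⁻¹ + 1) := by
    intro k
    rw [hform k]
    simp only [Matrix.mul_inv_rev, Matrix.nonsing_inv_nonsing_inv _ (hGdet k), Matrix.mul_assoc]
  have hmid : ∀ k : Fin T,
      Brho k * ((1 : Matrix (Fin m) (Fin m) ℝ) + (Brho k)ᵀ * Γ k.succ * Brho k)⁻¹ * (Brho k)ᵀ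
        = B k * ((Srho k)⁻¹ + 1 + (B k)ᵀ * Γ k.succ * B k)⁻¹ * (B k)ᵀ := by
    intro k
    rw [hcovEq k, hBrhoT k, hBrho k]
    simp only [Matrix.mul_assoc]
    rw [Matrix.nonsing_inv_mul_cancel_left _ _ (hGdet k),
      Matrix.mul_nonsing_inv_cancel_left _ _ (hGdet k)]
  have h1 : ∀ k : Fin (T + 1), Pm k = Γ k := by
    intro k
    induction k using Fin.reverseInduction with
    | last => rw [hPmT, hterm]
    | cast k ih =>
      rw [hricME k, hric k, ih]
      congr 1
      have h2 := congrArg (fun X => (A k)ᵀ * Γ k.succ * X * (Γ k.succ * A k)) (hmid k)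
      simpa only [Matrix.mul_assoc] using h2
  refine ⟨h1, ?_⟩
  unfold ctrlLaw
  congr 1
  funext k x
  have hKpos : (((Srho k)⁻¹ + 1 + (B k)ᵀ * Γ k.succ * B k)⁻¹).PosDef := (hpos k).inv
  have hWt := msqrt_transpose hKpos.posSemidef
  have hWW := msqrt_mul_self hKpos.posSemidef
  have hWdet := msqrt_det_isUnit hKpos
  have hWiT : ((msqrt (((Srho k)⁻¹ + 1 + (B k)ᵀ * Γ k.succ * B k)⁻¹))⁻¹)ᵀ
      = (msqrt (((Srho k)⁻¹ + 1 + (B k)ᵀ * Γ k.succ * B k)⁻¹))⁻¹ := by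
    rw [Matrix.transpose_nonsing_inv, hWt]
  have hΛ1 : MEpolCov Brho Pm k
      = msqrt ((Srho k)⁻¹ + 1) * ((Srho k)⁻¹ + 1 + (B k)ᵀ * Γ k.succ * B k)⁻¹ *
          msqrt ((Srho k)⁻¹ + 1) := by
    simp only [MEpolCov, h1 k.succ]
    exact hcovEq k
  have hΛ1psd : (MEpolCov Brho Pm k).PosSemidef := by
    rw [hΛ1]
    have h := hKpos.posSemidef.mul_mul_conjTranspose_same (msqrt ((Srho k)⁻¹ + 1))
    rwa [Matrix.conjTranspose_eq_transpose_of_trivial, hGt] at h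
  have hVt := msqrt_transpose hΛ1psd
  have hVV : msqrt (MEpolCov Brho Pm k) * msqrt (MEpolCov Brho Pm k)
      = msqrt ((Srho k)⁻¹ + 1) * ((Srho k)⁻¹ + 1 + (B k)ᵀ * Γ k.succ * B k)⁻¹ *
          msqrt ((Srho k)⁻¹ + 1) := by
    rw [msqrt_mul_self hΛ1psd, hΛ1]
  set G := msqrt ((Srho k)⁻¹ + 1) with hGdef
  set K := ((Srho k)⁻¹ + 1 + (B k)ᵀ * Γ k.succ * B k)⁻¹ with hKdef
  set W := msqrt K with hWdef
  set V := msqrt (MEpolCov Brho Pm k) with hVdef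
  set O := W⁻¹ * (G⁻¹ * V) with hOdef
  have hOOt : O * Oᵀ = 1 := by
    rw [hOdef, Matrix.transpose_mul, Matrix.transpose_mul, hVt, hGiT k, hWiT]
    simp only [Matrix.mul_assoc]
    rw [mul_pair hVV]
    simp only [Matrix.mul_assoc]
    rw [Matrix.nonsing_inv_mul_cancel_left _ _ (hGdet k),
      Matrix.mul_nonsing_inv_cancel_left _ _ (hGdet k), ← hWW]
    simp only [Matrix.mul_assoc]
    rw [Matrix.mul_nonsing_inv _ hWdet, Matrix.mul_one, Matrix.nonsing_inv_mul _ hWdet]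
  have hOtO : Oᵀ * O = 1 := mul_eq_one_comm.mp hOOt
  have hNrel : Brho k * msqrt (MEpolCov Brho Pm k)
      = B k * msqrt (MIpolCov B Srho Γ k) * O := by
    have hMIc : MIpolCov B Srho Γ k = K := rfl
    rw [hMIc, ← hWdef, ← hVdef, hOdef, hBrho k, ← hGdef]
    simp only [Matrix.mul_assoc]
    rw [Matrix.mul_nonsing_inv_cancel_left _ _ hWdet]
  have hmean : (A k).mulVec x + (Brho k).mulVec (MEpolMean A Brho Pm k x)
      = (A k).mulVec x + (B k).mulVec (MIpolMean A B Srho Γ k x) := by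
    congr 1
    simp only [MEpolMean, MIpolMean, Matrix.mulVec_neg, Matrix.mulVec_mulVec]
    have h3 := congrArg (fun X => X * (Γ k.succ * A k)) (hmid k)
    simp only [Matrix.mul_assoc] at h3
    simp only [MEpolCov, MIpolCov, h1 k.succ, Matrix.mul_assoc]
    rw [h3]
  rw [gaussian_map_affine, gaussian_map_affine, hmean]
  exact map_affine_congr _ _ _ O hOOt hOtO hNrel


end MIDC
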